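/- If S(x) = ∑_{n≥1} (1/(2n+1)) C(3n, n) x^n and T(x) = ∑_{n≥0} (1/(n+1)) C(3n+1, n) x^n as formal power series over ℚ, then (1 + S(x))^2 = T(x). -/

import Mathlib

open PowerSeries

/-- Generating function of S-Motzkin paths: `S(x) = ∑_{n ≥ 1} C(3n,n)/(2n+1) xⁿ`. -/
noncomputable def S : PowerSeries ℚ :=
  PowerSeries.mk fun n => if n = 0 then 0 else (Nat.choose (3 * n) n : ℚ) / (2 * n + 1)

/-- Generating function of T-Motzkin paths: `T(x) = ∑_{n ≥ 0} C(3n+1,n)/(n+1) xⁿ`. -/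
noncomputable def T : PowerSeries ℚ :=
  PowerSeries.mk fun n => (Nat.choose (3 * n + 1) n : ℚ) / (n + 1)

/- Auxiliary development: let `bb n = C(3n,n)/(2n+1)` and `BB = ∑ bb n xⁿ = 1 + S`.
We show `BB` satisfies the cubic `BB = 1 + X·BB³` via a differential-equation argument,
and deduce `BB² = T`. -/

private def bb (n : ℕ) : ℚ := (Nat.choose (3 * n) n : ℚ) / (2 * n + 1)

private noncomputable def BB : PowerSeries ℚ := PowerSeries.mk bb

private noncomputable def B1 : PowerSeries ℚ := d⁄dX ℚ BB

private noncomputable def B2 : PowerSeries ℚ := d⁄dX ℚ B1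

private noncomputable def EE : PowerSeries ℚ := BB - 1 - X * (BB * BB * BB)

private noncomputable def WW : PowerSeries ℚ := (1 - 3 * X * (BB * BB)) * B1 - BB * BB * BB

private lemma bb_zero : bb 0 = 1 := by norm_num [bb]

private lemma bb_one : bb 1 = 1 := by norm_num [bb]

private lemma bb_two : bb 2 = 3 := by norm_num [bb, Nat.choose]

private lemma bb_rec' (n : ℕ) :
    2 * ((n : ℚ) + 1) * (2 * n + 3) * (2 * n + 1) * (Nat.choose (3 * n + 3) (n + 1) : ℚ)
      = 3 * (3 * n + 1) * (3 * n + 2) * (2 * n + 3) * (Nat.choose (3 * n) n : ℚ) := by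
  have h1 := Nat.choose_mul_succ_eq (3 * n) n
  have h2 := Nat.choose_mul_succ_eq (3 * n + 1) n
  have h3 := Nat.choose_mul_succ_eq (3 * n + 2) n
  have h4 := Nat.choose_succ_right_eq (3 * n + 3) n
  rw [show 3 * n + 1 - n = 2 * n + 1 by omega] at h1
  rw [show 3 * n + 1 + 1 - n = 2 * n + 2 by omega] at h2
  rw [show 3 * n + 2 + 1 - n = 2 * n + 3 by omega] at h3
  rw [show 3 * n + 3 - n = 2 * n + 3 by omega] at h4
  have hq1 := congrArg (Nat.cast : ℕ → ℚ) h1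
  have hq2 := congrArg (Nat.cast : ℕ → ℚ) h2
  have hq3 := congrArg (Nat.cast : ℕ → ℚ) h3
  have hq4 := congrArg (Nat.cast : ℕ → ℚ) h4
  push_cast at hq1 hq2 hq3 hq4
  linear_combination (-(3 : ℚ) * (2 * n + 3) * (3 * n + 2)) * hq1
    + (-(3 : ℚ) * (2 * n + 3) * (2 * n + 1)) * hq2
    + (-(2 : ℚ) * (2 * n + 3) * (2 * n + 1)) * hq3
    + ((2 : ℚ) * (2 * n + 3) * (2 * n + 1)) * hq4

private lemma bb_rec (n : ℕ) :
    2 * ((n : ℚ) + 1) * (2 * n + 3) * bb (n + 1) = 3 * (3 * n + 1) * (3 * n + 2) * bb n := by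
  have h21 : (2 * (n : ℚ) + 1) ≠ 0 := by positivity
  have h23 : (2 * ((n : ℚ) + 1) + 1) ≠ 0 := by positivity
  rw [bb, bb, show 3 * (n + 1) = 3 * n + 3 by ring]
  push_cast
  field_simp
  linear_combination bb_rec' n


private lemma coeff_BB (n : ℕ) : coeff n BB = bb n := by simp [BB]

private lemma coeff_B1 (n : ℕ) : coeff n B1 = bb (n + 1) * ((n : ℚ) + 1) := by
  rw [B1, coeff_derivative, coeff_BB]

private lemma coeff_B2 (n : ℕ) :
    coeff n B2 = bb (n + 2) * ((n : ℚ) + 2) * ((n : ℚ) + 1) := by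
  rw [B2, coeff_derivative, coeff_B1, show n + 1 + 1 = n + 2 from rfl]
  push_cast
  ring

private lemma d_three : d⁄dX ℚ (3 : PowerSeries ℚ) = 0 := by
  rw [← map_ofNat (C) 3, derivative_C]

/-- The linear ODE satisfied by `BB`, in smul form. -/
private lemma hLs :
    (4 : ℚ) • (X * B2) - (27 : ℚ) • (X ^ 2 * B2)
      = (54 : ℚ) • (X * B1) - (6 : ℚ) • B1 + (6 : ℚ) • BB := by
  rw [show (X : PowerSeries ℚ) ^ 2 * B2 = X * (X * B2) by ring]
  ext n
  simp only [map_sub, map_add, coeff_smul, smul_eq_mul]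
  rcases n with _ | _ | m
  · norm_num [coeff_zero_X_mul, coeff_B1, coeff_BB, bb_zero, bb_one]
  · norm_num [coeff_succ_X_mul, coeff_zero_X_mul, coeff_B1, coeff_B2, coeff_BB,
      bb_one, bb_two]
  · simp only [coeff_succ_X_mul, coeff_B1, coeff_B2, coeff_BB,
      show m + 1 + 2 = m + 3 from rfl, show m + 2 + 1 = m + 3 from rfl,
      show m + 1 + 1 = m + 2 from rfl]
    have h := bb_rec (m + 2)
    rw [show m + 2 + 1 = m + 3 from rfl] at h
    push_cast at h ⊢
    linear_combination h

/-- The linear ODE satisfied by `BB`. -/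
private lemma hL :
    (4 * X - 27 * X ^ 2) * B2 = (54 * X - 6) * B1 + 6 * BB := by
  have h := hLs
  simp only [smul_eq_C_mul, map_ofNat] at h
  linear_combination h

private lemma hdE : d⁄dX ℚ EE = WW := by
  rw [EE, WW]
  simp only [map_sub, Derivation.leibniz, smul_eq_mul, derivative_X,
    Derivation.map_one_eq_zero, d_three, B1]
  ring

private lemma hdW :
    d⁄dX ℚ WW = (1 - 3 * X * (BB * BB)) * B2 - 6 * (BB * BB) * B1 - 6 * X * BB * (B1 * B1) := by
  rw [WW]
  simp only [map_sub, Derivation.leibniz, smul_eq_mul, derivative_X,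
    Derivation.map_one_eq_zero, d_three, B1, B2]
  ring

private noncomputable def GG : PowerSeries ℚ := (1 - 3 * X * (BB * BB)) ^ 2 * (4 - 27 * X)

private noncomputable def aa : PowerSeries ℚ :=
  -6 * BB - 6 * BB ^ 2 + 6 * X * BB * B1 - 72 * X ^ 2 * B1 ^ 2 - 162 * X ^ 2 * BB * B1
    + 54 * X ^ 2 * BB ^ 3 * B1 + 162 * X ^ 2 * BB ^ 4 + 486 * X ^ 3 * B1 ^ 2
    + 216 * X ^ 3 * BB ^ 2 * B1 ^ 2 - 1458 * X ^ 4 * BB ^ 2 * B1 ^ 2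

private noncomputable def bP : PowerSeries ℚ :=
  -6 + 54 * X + 6 * X * BB + 6 * X * BB ^ 2 - 72 * X ^ 2 * B1 - 162 * X ^ 2 * BB
    + 48 * X ^ 2 * BB * B1 + 486 * X ^ 3 * B1 - 324 * X ^ 3 * BB * B1

/-- The key ideal-membership identity. -/
private lemma hKey : GG * (X * d⁄dX ℚ WW) = aa * EE + bP * WW := by
  rw [hdW, GG, aa, bP, EE, WW]
  linear_combination (1 - 3 * X * (BB * BB)) ^ 3 * hL

private lemma coeff_mul_zero_of (f g : PowerSeries ℚ) (n : ℕ)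
    (h : ∀ j ≤ n, coeff j g = 0) : coeff n (f * g) = 0 := by
  rw [coeff_mul]
  refine Finset.sum_eq_zero fun p hp => ?_
  rw [Finset.HasAntidiagonal.mem_antidiagonal] at hp
  rw [h p.2 (by omega), mul_zero]

private lemma coeff_mul_of_lt (f g : PowerSeries ℚ) (n : ℕ)
    (h : ∀ j < n, coeff j g = 0) :
    coeff n (f * g) = constantCoeff f * coeff n g := by
  rw [coeff_mul, Finset.sum_eq_single (0, n)]
  · rw [coeff_zero_eq_constantCoeff_apply]
  · rintro ⟨i, j⟩ hp hne
    rw [Finset.HasAntidiagonal.mem_antidiagonal] at hp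
    simp only [ne_eq, Prod.mk.injEq, not_and] at hne
    have hj : j < n := by
      rcases Nat.eq_zero_or_pos i with hi | hi
      · exact absurd (by omega : j = n) (hne hi)
      · omega
    rw [h j hj, mul_zero]
  · intro hmem
    exact absurd (Finset.HasAntidiagonal.mem_antidiagonal.mpr (by omega)) hmem

private lemma constantCoeff_GG : constantCoeff GG = 4 := by
  simp [GG, map_ofNat]

private lemma constantCoeff_bP : constantCoeff bP = -6 := by
  simp [bP, map_ofNat]

private lemma coeff_WW (n : ℕ) :
    coeff n WW = coeff (n + 1) EE * ((n + 1 : ℕ) : ℚ) := by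
  rw [← hdE, coeff_derivative]
  push_cast
  ring

private lemma coeff_EE_zero : ∀ n, coeff n EE = 0 := by
  intro n
  induction n using Nat.strong_induction_on with
  | _ n ih =>
    match n with
    | 0 =>
      rw [EE]
      simp [coeff_zero_X_mul, BB, constantCoeff_mk, bb_zero]
    | 1 =>
      have h1 : coeff 1 (X * (BB * BB * BB)) = coeff 0 (BB * BB * BB) :=
        coeff_succ_X_mul 0 _
      rw [EE, map_sub, map_sub, h1, coeff_zero_eq_constantCoeff_apply]
      rw [coeff_BB, bb_one]
      simp [BB, constantCoeff_mk, bb_zero, coeff_one]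
    | (m + 2) =>
      have hW : ∀ j < m + 1, coeff j WW = 0 := by
        intro j hj
        rw [coeff_WW, ih (j + 1) (by omega), zero_mul]
      have hXdW : ∀ j < m + 1, coeff j (X * d⁄dX ℚ WW) = 0 := by
        intro j hj
        match j, hj with
        | 0, _ => exact coeff_zero_X_mul _
        | (k + 1), hj =>
          rw [coeff_succ_X_mul, coeff_derivative, coeff_WW, ih (k + 1 + 1) (by omega),
            zero_mul, zero_mul]
      have hkey := congrArg (coeff (m + 1)) hKey
      rw [map_add, coeff_mul_of_lt _ _ _ hXdW,
        coeff_mul_zero_of _ _ _ (fun j hj => ih j (by omega)),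
        coeff_mul_of_lt _ _ _ hW, constantCoeff_GG, constantCoeff_bP,
        coeff_succ_X_mul, coeff_derivative, coeff_WW] at hkey
      -- hkey : 4 * (coeff (m+2) EE * (m+2) * (m+1)) = 0 + -6 * (coeff (m+2) EE * (m+2))
      have hfac : (((m : ℚ) + 2) * (4 * ((m : ℚ) + 1) + 6)) ≠ 0 := by positivity
      have hz : coeff (m + 1 + 1) EE * (((m : ℚ) + 2) * (4 * ((m : ℚ) + 1) + 6)) = 0 := by
        push_cast at hkey ⊢
        linear_combination hkey
      show coeff (m + 1 + 1) EE = 0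
      exact (mul_eq_zero.mp hz).resolve_right hfac

private lemma hE0 : EE = 0 := by
  ext n
  rw [coeff_EE_zero, map_zero]

private lemma hW0 : WW = 0 := by
  ext n
  rw [coeff_WW, coeff_EE_zero, zero_mul, map_zero]

private lemma hQ0 : 2 * X * BB * B1 - 3 * X * B1 + BB * BB - BB = 0 := by
  have hQ : (1 - 3 * X * (BB * BB)) * (2 * X * BB * B1 - 3 * X * B1 + BB * BB - BB)
      = BB * EE + (X * (2 * BB - 3)) * WW := by
    rw [EE, WW]; ring
  rw [hE0, hW0, mul_zero, mul_zero, add_zero] at hQ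
  rcases mul_eq_zero.mp hQ with h | h
  · exfalso
    have h0 := congrArg (constantCoeff) h
    simp [constantCoeff_X, map_ofNat] at h0
  · exact h

private lemma coeff_X_dX (f : PowerSeries ℚ) (n : ℕ) :
    coeff n (X * d⁄dX ℚ f) = n * coeff n f := by
  cases n with
  | zero => simp [coeff_zero_X_mul]
  | succ m =>
    rw [coeff_succ_X_mul, coeff_derivative]
    push_cast
    ring

private lemma tEq (n : ℕ) :
    (Nat.choose (3 * n + 1) n : ℚ) = (3 * (n : ℚ) + 1) * bb n := by
  have h := Nat.choose_mul_succ_eq (3 * n) n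
  rw [show 3 * n + 1 - n = 2 * n + 1 by omega] at h
  have hq := congrArg (Nat.cast : ℕ → ℚ) h
  push_cast at hq
  rw [bb, mul_div_assoc', eq_div_iff (by positivity : (2 * (n : ℚ) + 1) ≠ 0)]
  linear_combination -hq

theorem stmt_3 : (1 + S) ^ 2 = T := by
  have hBS : 1 + S = BB := by
    ext n
    cases n with
    | zero => simp [S, BB, bb, coeff_one]
    | succ m => simp [S, BB, bb, coeff_one]
  rw [hBS, pow_two]
  ext n
  have hne : ((n : ℚ) + 1) ≠ 0 := by positivity
  apply mul_left_cancel₀ hne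
  have hd2 : d⁄dX ℚ (BB * BB) = 2 * BB * B1 := by
    simp only [Derivation.leibniz, smul_eq_mul, B1]
    ring
  have key : BB * BB + X * d⁄dX ℚ (BB * BB) = BB + (C 3) * (X * B1) := by
    rw [hd2, show (C 3 : PowerSeries ℚ) = 3 from map_ofNat _ 3]
    linear_combination hQ0
  have h1 := congrArg (coeff n) key
  rw [map_add, map_add, coeff_X_dX, coeff_C_mul,
    show X * B1 = X * d⁄dX ℚ BB from by rw [B1], coeff_X_dX, coeff_BB] at h1
  -- h1 : coeff n (BB*BB) + n * coeff n (BB*BB) = bb n + 3 * (n * bb n)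
  have hT : coeff n T = (Nat.choose (3 * n + 1) n : ℚ) / ((n : ℚ) + 1) := by
    simp [T]
  rw [hT, tEq]
  field_simp
  linear_combination h1
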